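/- Every additive subgroup G of ℚ containing 1 is equal to G(n) for some sequence n : ℕ → ℕ+ of positive integers, i.e., there exists a sequence of positive integers n_i such that G = { p/q ∈ ℚ : q = ∏_{i=1}^k n_i for some k ≥ 0 }. -/

import Mathlib

/-- For a sequence `n : ℕ → ℕ+`, `GSet n` is the set of rationals expressible as a fraction
`p / q` (not necessarily in lowest terms) whose denominator is a product of an initial
segment of the sequence: `q = ∏_{i<k} n i` for some `k ≥ 0` (the empty product being `1`). -/
def GSet (n : ℕ → ℕ+) : Set ℚ :=
  {x | ∃ (p : ℤ) (k : ℕ), x = (p : ℚ) / ∏ i ∈ Finset.range k, ((n i : ℕ) : ℚ)}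

open Classical in
noncomputable def gDen (G : AddSubgroup ℚ) (k : ℕ) : ℕ :=
  if ((Denumerable.eqv ℚ).symm k) ∈ G then ((Denumerable.eqv ℚ).symm k).den else 1

noncomputable def gP (G : AddSubgroup ℚ) : ℕ → ℕ
  | 0 => 1
  | k+1 => Nat.lcm (gP G k) (gDen G k)

lemma gDen_pos (G : AddSubgroup ℚ) (k : ℕ) : 0 < gDen G k := by
  unfold gDen; split <;> simp [Rat.den_pos]

lemma gP_pos (G : AddSubgroup ℚ) : ∀ k, 0 < gP G k
  | 0 => one_pos
  | k+1 => Nat.lcm_pos (gP_pos G k) (gDen_pos G k)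

lemma gP_dvd (G : AddSubgroup ℚ) (k : ℕ) : gP G k ∣ gP G (k+1) :=
  Nat.dvd_lcm_left _ _

noncomputable def gN (G : AddSubgroup ℚ) (k : ℕ) : ℕ+ :=
  ⟨gP G (k+1) / gP G k,
    Nat.div_pos (Nat.le_of_dvd (gP_pos G _) (gP_dvd G k)) (gP_pos G k)⟩

lemma gN_coe (G : AddSubgroup ℚ) (k : ℕ) : (gN G k : ℕ) = gP G (k+1) / gP G k := rfl

lemma gN_prod (G : AddSubgroup ℚ) (k : ℕ) :
    (∏ i ∈ Finset.range k, (gN G i : ℕ)) = gP G k := by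
  induction k with
  | zero => simp [gP]
  | succ k ih =>
    rw [Finset.prod_range_succ, ih, gN_coe, Nat.mul_div_cancel' (gP_dvd G k)]

lemma gN_prod_cast (G : AddSubgroup ℚ) (k : ℕ) :
    (∏ i ∈ Finset.range k, ((gN G i : ℕ) : ℚ)) = (gP G k : ℚ) := by
  rw [← Nat.cast_prod, gN_prod]

lemma inv_den_mem (G : AddSubgroup ℚ) (h1 : (1:ℚ) ∈ G) {x : ℚ} (hx : x ∈ G) :
    ((x.den : ℚ))⁻¹ ∈ G := by
  have hg : Int.gcd x.num x.den = 1 := x.reduced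
  have hbez := Int.gcd_eq_gcd_ab x.num (x.den : ℤ)
  rw [hg] at hbez
  have hden : (x.den : ℚ) ≠ 0 := by positivity
  have hmem : Int.gcdA x.num x.den • x + Int.gcdB x.num x.den • (1:ℚ) ∈ G :=
    G.add_mem (AddSubgroup.zsmul_mem G hx _) (AddSubgroup.zsmul_mem G h1 _)
  have hnum : ((Int.gcdA x.num x.den : ℚ)) * (x.num:ℚ)
      + ((Int.gcdB x.num x.den : ℚ)) * (x.den : ℚ) = 1 := by
    have : ((1:ℤ):ℚ) = ((x.num * Int.gcdA x.num x.den + x.den * Int.gcdB x.num x.den : ℤ) : ℚ) := by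
      exact_mod_cast congrArg (fun z : ℤ => (z:ℚ)) hbez
    push_cast at this
    linarith
  set u := Int.gcdA x.num x.den with hu
  set v := Int.gcdB x.num x.den with hv
  have heq : u • x + v • (1:ℚ) = ((x.den : ℚ))⁻¹ := by
    rw [zsmul_eq_mul, zsmul_eq_mul, mul_one]
    conv_lhs => rw [← Rat.num_div_den x]
    rw [mul_div_assoc', div_add' _ _ _ hden, hnum, one_div]
  rwa [heq] at hmem

lemma inv_lcm_mem (G : AddSubgroup ℚ) {a b : ℕ} (ha : 0 < a) (hb : 0 < b)
    (hma : ((a:ℚ))⁻¹ ∈ G) (hmb : ((b:ℚ))⁻¹ ∈ G) :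
    ((Nat.lcm a b : ℚ))⁻¹ ∈ G := by
  have hbez : ((Int.gcd (a:ℤ) (b:ℤ) : ℤ) : ℚ)
      = (a:ℚ) * Int.gcdA a b + (b:ℚ) * Int.gcdB a b := by
    exact_mod_cast congrArg (fun z : ℤ => (z : ℚ)) (Int.gcd_eq_gcd_ab (a:ℤ) (b:ℤ))
  have hgl : (Nat.gcd a b : ℚ) * (Nat.lcm a b : ℚ) = (a : ℚ) * b := by
    exact_mod_cast congrArg (fun m : ℕ => (m : ℚ)) (Nat.gcd_mul_lcm a b)
  have hmem : Int.gcdB (a:ℤ) (b:ℤ) • ((a:ℚ))⁻¹ + Int.gcdA (a:ℤ) (b:ℤ) • ((b:ℚ))⁻¹ ∈ G :=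
    G.add_mem (AddSubgroup.zsmul_mem G hma _) (AddSubgroup.zsmul_mem G hmb _)
  have ha0 : (a:ℚ) ≠ 0 := by positivity
  have hb0 : (b:ℚ) ≠ 0 := by positivity
  have hl0 : (Nat.lcm a b : ℚ) ≠ 0 := by
    have := Nat.lcm_pos ha hb; positivity
  have hgcd : ((Int.gcd (a:ℤ) (b:ℤ) : ℤ) : ℚ) = (Nat.gcd a b : ℚ) := by
    simp [Int.gcd_natCast_natCast]
  have : Int.gcdB (a:ℤ) (b:ℤ) • ((a:ℚ))⁻¹ + Int.gcdA (a:ℤ) (b:ℤ) • ((b:ℚ))⁻¹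
      = ((Nat.lcm a b : ℚ))⁻¹ := by
    rw [zsmul_eq_mul, zsmul_eq_mul]
    rw [hgcd] at hbez
    field_simp
    nlinarith [hbez, hgl]
  rwa [this] at hmem

lemma inv_gP_mem (G : AddSubgroup ℚ) (h1 : (1:ℚ) ∈ G) : ∀ k, ((gP G k : ℚ))⁻¹ ∈ G := by
  intro k
  induction k with
  | zero => simpa [gP] using h1
  | succ k ih =>
    show ((Nat.lcm (gP G k) (gDen G k) : ℚ))⁻¹ ∈ G
    apply inv_lcm_mem G (gP_pos G k) (gDen_pos G k) ih
    unfold gDen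
    split
    · exact inv_den_mem G h1 (by assumption)
    · simpa using h1

/-- Every additive subgroup of ℚ containing 1 is of the form G(n) for some sequence
n : ℕ → ℕ+ of positive integers. -/
theorem subgroup_of_rat_eq_gset (G : AddSubgroup ℚ) (h1 : (1 : ℚ) ∈ G) :
    ∃ n : ℕ → ℕ+, (G : Set ℚ) = GSet n := by
  refine ⟨gN G, ?_⟩
  ext x
  simp only [GSet, Set.mem_setOf_eq, SetLike.mem_coe, gN_prod_cast]
  constructor
  · intro hx
    obtain ⟨k, hk⟩ : ∃ k, (Denumerable.eqv ℚ).symm k = x :=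
      ⟨Denumerable.eqv ℚ x, Equiv.symm_apply_apply _ x⟩
    have hden : gDen G k = x.den := by
      unfold gDen; rw [hk, if_pos hx]
    have hdvd : x.den ∣ gP G (k+1) := hden ▸ Nat.dvd_lcm_right _ _
    refine ⟨x.num * (gP G (k+1) / x.den), k+1, ?_⟩
    have hP0 : (gP G (k+1) : ℚ) ≠ 0 := by have := gP_pos G (k+1); positivity
    have hd0 : (x.den : ℚ) ≠ 0 := by positivity
    have hq : ((gP G (k+1) / x.den : ℕ) : ℚ) = (gP G (k+1) : ℚ) / x.den :=
      Nat.cast_div hdvd hd0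
    push_cast [hq]
    rw [eq_div_iff hP0]
    have hxx : x * (x.den : ℚ) = (x.num : ℚ) := by
      exact_mod_cast Rat.mul_den_eq_num x
    field_simp
    rw [← Int.natCast_ediv, Int.cast_natCast, hq, ← hxx, mul_assoc, mul_div_cancel₀ _ hd0]
  · rintro ⟨p, k, hpk⟩
    have : x = p • ((gP G k : ℚ))⁻¹ := by
      rw [hpk, zsmul_eq_mul, div_eq_mul_inv]
    rw [this]
    exact AddSubgroup.zsmul_mem G (inv_gP_mem G h1 k) p
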